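/- Let f(p) = −(M/ln 2) e^{1/(pδ)} Ei(−1/(pδ)) and g(p) = −(M/ln 2) e^{σ²/(pδ)} Ei(−σ²/(pδ)) for δ > 0 and σ² > 1. Then lim_{p→∞}(f(p) − g(p)) = M log₂ σ². -/

import Mathlib

open MeasureTheory Filter Topology

/-- The exponential integral `Ei(x) = ∫_{−∞}^x e^t / t dt`. -/
noncomputable def Ei (x : ℝ) : ℝ := ∫ t in Set.Iic x, Real.exp t / t

lemma EiIntegrable {c : ℝ} (hc : c < 0) :
    IntegrableOn (fun t => Real.exp t / t) (Set.Iic c) := by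
  have hint : Integrable (fun t => Real.exp t / (-c)) (volume.restrict (Set.Iic c)) :=
    (integrableOn_exp_Iic c).div_const (-c)
  refine hint.mono' ((Real.measurable_exp.div measurable_id).aestronglyMeasurable) ?_
  filter_upwards [ae_restrict_mem measurableSet_Iic] with t ht
  have ht' : t ≤ c := ht
  have ht0 : t < 0 := lt_of_le_of_lt ht hc
  have : ‖Real.exp t / t‖ = Real.exp t / (-t) := by
    rw [norm_div, Real.norm_eq_abs, Real.norm_eq_abs, Real.abs_exp, abs_of_neg ht0]
  rw [this]
  gcongr
  all_goals first | positivity | linarith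

lemma Ei_sub {a b : ℝ} (ha : a < 0) (hb : b < 0) :
    Ei b - Ei a = ∫ t in a..b, Real.exp t / t := by
  rw [Ei, Ei]
  exact intervalIntegral.integral_Iic_sub_Iic (EiIntegrable ha) (EiIntegrable hb)

lemma intervalIntegrable_neg {f : ℝ → ℝ} (hf : ContinuousOn f (Set.Iio 0))
    {a b : ℝ} (ha : a < 0) (hb : b < 0) : IntervalIntegrable f volume a b := by
  refine (hf.mono ?_).intervalIntegrable
  intro t ht
  exact lt_of_le_of_lt ht.2 (max_lt ha hb)

lemma contOn_exp_div : ContinuousOn (fun t : ℝ => Real.exp t / t) (Set.Iio 0) :=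
  Real.continuous_exp.continuousOn.div continuousOn_id (fun t ht => ne_of_lt ht)

lemma contOn_one_div : ContinuousOn (fun t : ℝ => 1 / t) (Set.Iio 0) :=
  continuousOn_const.div continuousOn_id (fun t ht => ne_of_lt ht)

lemma contOn_exp_sub_one_div : ContinuousOn (fun t : ℝ => (Real.exp t - 1) / t) (Set.Iio 0) :=
  ((Real.continuous_exp.sub continuous_const).continuousOn).div continuousOn_id
    (fun t ht => ne_of_lt ht)

/-- `|Ei(-v)| ≤ |Ei(-1)| - log v` for `0 < v < 1`. -/
lemma Ei_bound {v : ℝ} (hv0 : 0 < v) (hv1 : v < 1) :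
    |Ei (-v)| ≤ |Ei (-1)| + (-Real.log v) := by
  have h1 : (-1 : ℝ) < 0 := by norm_num
  have hv : -v < 0 := by linarith
  have hsub := Ei_sub h1 hv
  have hbound : ‖∫ t in (-1 : ℝ)..(-v), Real.exp t / t‖ ≤
      |∫ t in (-1 : ℝ)..(-v), -(1 / t)| := by
    refine intervalIntegral.norm_integral_le_abs_of_norm_le ?_
      ((contOn_one_div.neg).mono ?_ |>.intervalIntegrable)
    · filter_upwards [ae_restrict_mem measurableSet_uIoc] with t ht
      have htl : -1 < t := by
        rcases Set.mem_uIoc.mp ht with h | h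
        · exact h.1
        · linarith [h.2, hv1]
      have htr : t < 0 := by
        rcases Set.mem_uIoc.mp ht with h | h
        · linarith [h.2]
        · linarith [h.2, hv0]
      have : ‖Real.exp t / t‖ = Real.exp t / (-t) := by
        rw [norm_div, Real.norm_eq_abs, Real.norm_eq_abs, Real.abs_exp, abs_of_neg htr]
      rw [this]
      have h2 : -(1 / t) = 1 / (-t) := by ring
      rw [h2]
      gcongr
      · linarith
      · exact Real.exp_le_one_iff.mpr htr.le
    · intro t ht
      exact lt_of_le_of_lt ht.2 (max_lt h1 hv)
  have hval : ∫ t in (-1 : ℝ)..(-v), -(1 / t) = -Real.log v := by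
    rw [intervalIntegral.integral_neg, integral_one_div_of_neg h1 hv]
    have : (-v) / (-1 : ℝ) = v := by ring
    rw [this]
  have habs : |(-Real.log v : ℝ)| = -Real.log v := by
    rw [abs_of_nonneg]
    simp only [neg_nonneg]
    exact Real.log_nonpos hv0.le hv1.le
  calc |Ei (-v)| = |Ei (-1) + (Ei (-v) - Ei (-1))| := by ring_nf
    _ ≤ |Ei (-1)| + |Ei (-v) - Ei (-1)| := abs_add_le _ _
    _ ≤ |Ei (-1)| + (-Real.log v) := by
        have := hsub ▸ hbound
        rw [hval, habs, Real.norm_eq_abs] at this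
        linarith [this]

lemma corr1 : Tendsto (fun v => (Real.exp v - 1) * Ei (-v)) (𝓝[>] (0:ℝ)) (𝓝 0) := by
  have hlog : Tendsto (fun x : ℝ => Real.log x * x) (𝓝[>] 0) (𝓝 0) := by
    have h := tendsto_log_mul_rpow_nhdsGT_zero zero_lt_one
    simpa [Real.rpow_one] using h
  have hg : Tendsto (fun v : ℝ => |Ei (-1)| * (Real.exp v - 1) +
      Real.exp 1 * (-(Real.log v * v))) (𝓝[>] 0) (𝓝 0) := by
    have h1 : Tendsto (fun v : ℝ => |Ei (-1)| * (Real.exp v - 1)) (𝓝 (0:ℝ)) (𝓝 0) := by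
      have : Continuous fun v : ℝ => |Ei (-1)| * (Real.exp v - 1) := by continuity
      have h := this.tendsto 0
      simpa using h
    have h2 := (hlog.neg).const_mul (Real.exp 1)
    have := (h1.mono_left nhdsWithin_le_nhds).add h2
    simpa using this
  refine squeeze_zero_norm' ?_ hg
  filter_upwards [Ioo_mem_nhdsGT_of_mem (by simp : (0:ℝ) ∈ Set.Ico 0 1)] with v hv
  obtain ⟨hv0, hv1⟩ := hv
  have hev : (1:ℝ) ≤ Real.exp v := Real.one_le_exp hv0.le
  have hL : 0 ≤ -Real.log v := by
    simp only [neg_nonneg]; exact Real.log_nonpos hv0.le hv1.le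
  have hnorm : ‖(Real.exp v - 1) * Ei (-v)‖ = (Real.exp v - 1) * |Ei (-v)| := by
    rw [Real.norm_eq_abs, abs_mul, abs_of_nonneg (by linarith)]
  rw [hnorm]
  have hb := Ei_bound hv0 hv1
  have step1 : (Real.exp v - 1) * |Ei (-v)| ≤
      (Real.exp v - 1) * (|Ei (-1)| + (-Real.log v)) :=
    mul_le_mul_of_nonneg_left hb (by linarith)
  have key1 : (1 - v) * Real.exp v ≤ Real.exp (-v) * Real.exp v :=
    mul_le_mul_of_nonneg_right (by linarith [Real.add_one_le_exp (-v)]) (Real.exp_pos v).le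
  have key2 : Real.exp (-v) * Real.exp v = 1 := by
    rw [← Real.exp_add]; simp
  have key3 : Real.exp v ≤ Real.exp 1 := Real.exp_le_exp.mpr hv1.le
  have h4 : Real.exp v - 1 ≤ v * Real.exp 1 := by nlinarith
  have step2 : (Real.exp v - 1) * (-Real.log v) ≤ Real.exp 1 * (-(Real.log v * v)) := by
    have := mul_le_mul_of_nonneg_right h4 hL
    nlinarith
  nlinarith [step1, step2]

lemma corr (a : ℝ) (ha : 0 < a) :
    Tendsto (fun u => (Real.exp (a*u) - 1) * Ei (-(a*u))) (𝓝[>] (0:ℝ)) (𝓝 0) := by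
  have hmap : Tendsto (fun u : ℝ => a * u) (𝓝[>] 0) (𝓝[>] 0) := by
    rw [tendsto_nhdsWithin_iff]
    constructor
    · have : Tendsto (fun u : ℝ => a * u) (𝓝 0) (𝓝 (a * 0)) :=
        (continuous_const.mul continuous_id).tendsto 0
      simpa using this.mono_left nhdsWithin_le_nhds
    · filter_upwards [eventually_mem_nhdsWithin] with u hu
      exact Set.mem_Ioi.mpr (mul_pos ha hu)
  exact corr1.comp hmap

lemma main_part (σ2 : ℝ) (hσ2 : 1 < σ2) :
    Tendsto (fun u => Ei (-(σ2*u)) - Ei (-u)) (𝓝[>] (0:ℝ)) (𝓝 (Real.log σ2)) := by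
  have hR : Tendsto (fun u => ∫ t in (-(σ2*u))..(-u), (Real.exp t - 1)/t)
      (𝓝[>] (0:ℝ)) (𝓝 0) := by
    have hg : Tendsto (fun u : ℝ => (σ2 - 1) * u) (𝓝[>] (0:ℝ)) (𝓝 0) := by
      have : Tendsto (fun u : ℝ => (σ2 - 1) * u) (𝓝 0) (𝓝 ((σ2-1) * 0)) :=
        (continuous_const.mul continuous_id).tendsto 0
      simpa using this.mono_left nhdsWithin_le_nhds
    refine squeeze_zero_norm' ?_ hg
    filter_upwards [eventually_mem_nhdsWithin] with u hu
    have hu0 : 0 < u := hu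
    have h := intervalIntegral.norm_integral_le_of_norm_le_const
      (a := -(σ2*u)) (b := -u) (C := 1)
      (f := fun t => (Real.exp t - 1)/t) ?_
    · calc ‖∫ t in (-(σ2*u))..(-u), (Real.exp t - 1)/t‖ ≤ 1 * |(-u) - (-(σ2*u))| := h
        _ = (σ2 - 1) * u := by
          rw [one_mul, abs_of_nonneg (by nlinarith)]; ring
    · intro t ht
      have hlt : -(σ2*u) < -u := by nlinarith
      rw [Set.uIoc_of_le hlt.le] at ht
      have ht0 : t < 0 := lt_of_le_of_lt ht.2 (by linarith)
      have hnorm : ‖(Real.exp t - 1)/t‖ = (1 - Real.exp t) / (-t) := by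
        rw [norm_div, Real.norm_eq_abs, Real.norm_eq_abs,
          abs_of_nonpos (by linarith [Real.exp_le_one_iff.mpr ht0.le]), abs_of_neg ht0]
        ring_nf
      rw [hnorm, div_le_one (by linarith)]
      linarith [Real.add_one_le_exp t]
  have heq : ∀ᶠ u in 𝓝[>] (0:ℝ),
      Real.log σ2 - (∫ t in (-(σ2*u))..(-u), (Real.exp t - 1)/t)
        = Ei (-(σ2*u)) - Ei (-u) := by
    filter_upwards [eventually_mem_nhdsWithin] with u hu
    have hu0 : 0 < u := hu
    have hσu : -(σ2*u) < 0 := by nlinarith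
    have hmu : -u < 0 := by linarith
    have hsub := Ei_sub hσu hmu
    have hsplit : (fun t : ℝ => Real.exp t / t)
        = fun t => 1/t + (Real.exp t - 1)/t := by
      funext t
      rw [← add_div]
      norm_num
    have hi1 : IntervalIntegrable (fun t : ℝ => 1/t) volume (-(σ2*u)) (-u) :=
      intervalIntegrable_neg contOn_one_div hσu hmu
    have hi2 : IntervalIntegrable (fun t : ℝ => (Real.exp t - 1)/t) volume (-(σ2*u)) (-u) :=
      intervalIntegrable_neg contOn_exp_sub_one_div hσu hmu
    have hadd : ∫ t in (-(σ2*u))..(-u), Real.exp t / t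
        = (∫ t in (-(σ2*u))..(-u), 1/t) + ∫ t in (-(σ2*u))..(-u), (Real.exp t - 1)/t := by
      rw [hsplit]
      exact intervalIntegral.integral_add hi1 hi2
    have hlogint : ∫ t in (-(σ2*u))..(-u), 1/t = -Real.log σ2 := by
      rw [integral_one_div_of_neg hσu hmu]
      have : (-u) / (-(σ2*u)) = σ2⁻¹ := by
        field_simp
      rw [this, Real.log_inv]
    have hfin : Ei (-u) - Ei (-(σ2*u))
        = -Real.log σ2 + ∫ t in (-(σ2*u))..(-u), (Real.exp t - 1)/t := by
      rw [hsub, hadd, hlogint]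
    linarith [hfin]
  have := (tendsto_const_nhds.sub hR).congr' heq
  simpa using this

lemma combined (σ2 : ℝ) (hσ2 : 1 < σ2) :
    Tendsto (fun u => Real.exp (σ2*u) * Ei (-(σ2*u)) - Real.exp u * Ei (-u))
      (𝓝[>] (0:ℝ)) (𝓝 (Real.log σ2)) := by
  have h := ((main_part σ2 hσ2).add (corr σ2 (by linarith))).sub (corr 1 one_pos)
  simp only [one_mul, add_zero, sub_zero] at h
  exact h.congr (fun u => by ring)

/-- The high-SNR gap between the C-C and S-C uplink sum ergodic communication rates:
`f(p) − g(p) → M log₂ σ²`, where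
`f(p) = −(M/ln 2) e^{1/(pδ)} Ei(−1/(pδ))` and
`g(p) = −(M/ln 2) e^{σ²/(pδ)} Ei(−σ²/(pδ))`. -/
theorem stmt_17 (M : ℕ) (hM : 0 < M) (δ σ2 : ℝ) (hδ : 0 < δ) (hσ2 : 1 < σ2) :
    Tendsto
      (fun p : ℝ =>
        (-(M / Real.log 2) * Real.exp (1 / (p * δ)) * Ei (-(1 / (p * δ))))
          - (-(M / Real.log 2) * Real.exp (σ2 / (p * δ)) * Ei (-(σ2 / (p * δ)))))
      atTop (𝓝 ((M : ℝ) * Real.logb 2 σ2)) := by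
  have hx : Tendsto (fun p : ℝ => 1/(p*δ)) atTop (𝓝[>] (0:ℝ)) := by
    rw [tendsto_nhdsWithin_iff]
    constructor
    · have h1 : Tendsto (fun p : ℝ => p * δ) atTop atTop :=
        tendsto_id.atTop_mul_const hδ
      exact h1.inv_tendsto_atTop.congr (fun p => (one_div _).symm)
    · filter_upwards [eventually_gt_atTop 0] with p hp
      exact Set.mem_Ioi.mpr (by positivity)
  have h := (combined σ2 hσ2).comp hx
  have h2 := h.const_mul ((M:ℝ)/Real.log 2)
  have hval : (M:ℝ) * Real.logb 2 σ2 = ((M:ℝ)/Real.log 2) * Real.log σ2 := by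
    rw [Real.logb]; ring
  rw [hval]
  refine h2.congr (fun p => ?_)
  have hm : σ2 * (1/(p*δ)) = σ2/(p*δ) := by ring
  simp only [Function.comp_apply, hm]
  ring
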